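/- Let λ be a partition with at most n parts with λ_1 − λ_n ≤ ℓ and R a sequence of rectangles each restricted of level ℓ. Then for every ν ∈ C^ℓ(λ;R), every t ∈ CST(λ′), every 1 ≤ k < n, and every i ≥ ℓ, the modified vacancy number vanishes: P_i^{(k)}(ν,t) = 0. -/
import Mathlib


open Classical

noncomputable section

namespace RiggedConf

/-- `Q_i(ρ) = Σ_j min(i, ρ_j)`, the number of cells in the first `i` columns of
the partition `ρ` (a partition is encoded as the multiset of its parts). -/
def Qi (i : ℕ) (ρ : Multiset ℕ) : ℕ := (ρ.map (min i)).sum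

/-- `m_i(ρ)`: the number of parts of `ρ` equal to `i`. -/
def mi (i : ℕ) (ρ : Multiset ℕ) : ℕ := ρ.count i

/-- `α_i(ρ)`: the size of the `i`-th column of `ρ`, i.e. the number of parts `≥ i`. -/
def colSize (i : ℕ) (ρ : Multiset ℕ) : ℕ := (ρ.filter (fun x => i ≤ x)).card

/-- A sequence of rectangles is a list of pairs `(μ_j, η_j)` (width, height).
`xiR R k` is the partition `ξ^{(k)}(R)` whose parts are the widths of the
rectangles of `R` of height exactly `k`. -/
def xiR (R : List (ℕ × ℕ)) (k : ℕ) : Multiset ℕ :=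
  ((R.filter (fun r => r.2 = k)).map (fun r => r.1) : List ℕ)

/-- `‖R‖ = Σ_{i<j} min(η_i,η_j) · min(μ_i,μ_j)`. -/
def normR (R : List (ℕ × ℕ)) : ℕ :=
  ∑ p ∈ Finset.range R.length, ∑ q ∈ Finset.Ioo p R.length,
    min (R.getD p (0, 0)).2 (R.getD q (0, 0)).2 *
      min (R.getD p (0, 0)).1 (R.getD q (0, 0)).1

/-- `lam` is a partition with at most `n` parts, `lam j` being the `j`-th part
(for `1 ≤ j ≤ n`; all later parts vanish). -/
def IsShape (n : ℕ) (lam : ℕ → ℕ) : Prop :=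
  (∀ i j, 1 ≤ i → i ≤ j → j ≤ n → lam j ≤ lam i) ∧ (∀ j, n < j → lam j = 0)

/-- A `(λ;R)`-configuration: a sequence `ν = (ν^{(1)}, ν^{(2)}, …)` of partitions
(with `ν^{(0)} = ∅` by convention) satisfying
`|ν^{(k)}| = Σ_{j>k} λ_j − Σ_a μ_a · max(η_a − k, 0)` for all `k ≥ 1`. -/
def IsConfig (n : ℕ) (lam : ℕ → ℕ) (R : List (ℕ × ℕ)) (ν : ℕ → Multiset ℕ) : Prop :=
  ν 0 = 0 ∧ (∀ k, ∀ x ∈ ν k, 0 < x) ∧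
  ∀ k, 1 ≤ k →
    ((ν k).sum : ℤ) =
      (∑ j ∈ Finset.Icc (k + 1) n, (lam j : ℤ)) -
        ((R.map (fun r => r.1 * (r.2 - k))).sum : ℤ)

/-- The vacancy numbers
`P_i^{(k)}(ν) = Q_i(ν^{(k-1)}) − 2 Q_i(ν^{(k)}) + Q_i(ν^{(k+1)}) + Q_i(ξ^{(k)}(R))`. -/
def vac (R : List (ℕ × ℕ)) (ν : ℕ → Multiset ℕ) (k i : ℕ) : ℤ :=
  (Qi i (ν (k - 1)) : ℤ) - 2 * (Qi i (ν k) : ℤ) + (Qi i (ν (k + 1)) : ℤ) +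
    (Qi i (xiR R k) : ℤ)

/-- Admissibility: all vacancy numbers are nonnegative. -/
def Admissible (R : List (ℕ × ℕ)) (ν : ℕ → Multiset ℕ) : Prop :=
  ∀ k i, 1 ≤ k → 1 ≤ i → 0 ≤ vac R ν k i

/-- A convenient finite bound: `|λ|`. -/
def bigB (n : ℕ) (lam : ℕ → ℕ) : ℕ := ∑ j ∈ Finset.Icc 1 n, lam j

/-- `cc(ν) = Σ_{k,i≥1} α_i^{(k)} (α_i^{(k)} − α_i^{(k+1)})`.  (All terms with
`k > n` or `i > |λ|` vanish, so the sum below is the full sum.) -/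
def ccNu (n : ℕ) (lam : ℕ → ℕ) (ν : ℕ → Multiset ℕ) : ℤ :=
  ∑ k ∈ Finset.Icc 1 n, ∑ i ∈ Finset.Icc 1 (bigB n lam),
    (colSize i (ν k) : ℤ) * ((colSize i (ν k) : ℤ) - (colSize i (ν (k + 1)) : ℤ))

/-- `|P| = Σ_{k,i≥1} m_i(ν^{(k)}) P_i^{(k)}(ν)`. -/
def Psum (n : ℕ) (lam : ℕ → ℕ) (R : List (ℕ × ℕ)) (ν : ℕ → Multiset ℕ) : ℤ :=
  ∑ k ∈ Finset.Icc 1 n, ∑ i ∈ Finset.Icc 1 (bigB n lam),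
    (mi i (ν k) : ℤ) * vac R ν k i

/-- The charge `c(ν) = ‖R‖ − cc(ν) − |P|` of a configuration. -/
def chargeNu (n : ℕ) (lam : ℕ → ℕ) (R : List (ℕ × ℕ)) (ν : ℕ → Multiset ℕ) : ℤ :=
  (normR R : ℤ) - ccNu n lam ν - Psum n lam R ν

/-- A rigging of `ν`: `J k i` is the multiset of labels attached to the parts of
`ν^{(k)}` that are equal to `i`; there are exactly `m_i(ν^{(k)})` labels, and each
label `x` satisfies `0 ≤ x ≤ P_i^{(k)}(ν)`. -/
def IsRigging (R : List (ℕ × ℕ)) (ν : ℕ → Multiset ℕ)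
    (J : ℕ → ℕ → Multiset ℕ) : Prop :=
  (∀ k i, (J k i).card = mi i (ν k)) ∧
  (∀ k i, ∀ x ∈ J k i, (x : ℤ) ≤ vac R ν k i)

/-- `|J|`: the sum of all labels of the rigging. -/
def Jwt (n : ℕ) (lam : ℕ → ℕ) (J : ℕ → ℕ → Multiset ℕ) : ℤ :=
  ∑ k ∈ Finset.Icc 1 n, ∑ i ∈ Finset.Icc 1 (bigB n lam), ((J k i).sum : ℤ)

/-- The charge `c(ν,J) = c(ν) + |J|` of a rigged configuration. -/
def chargeRC (n : ℕ) (lam : ℕ → ℕ) (R : List (ℕ × ℕ)) (ν : ℕ → Multiset ℕ)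
    (J : ℕ → ℕ → Multiset ℕ) : ℤ :=
  chargeNu n lam R ν + Jwt n lam J

/-- The cocharge `cc(ν,J) = cc(ν) + |J|` of a rigged configuration. -/
def ccRC (n : ℕ) (lam : ℕ → ℕ) (ν : ℕ → Multiset ℕ)
    (J : ℕ → ℕ → Multiset ℕ) : ℤ :=
  ccNu n lam ν + Jwt n lam J

/-- Membership in `RC(λ;R)`. -/
def RCmem (n : ℕ) (lam : ℕ → ℕ) (R : List (ℕ × ℕ)) (ν : ℕ → Multiset ℕ)
    (J : ℕ → ℕ → Multiset ℕ) : Prop :=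
  IsConfig n lam R ν ∧ Admissible R ν ∧ IsRigging R ν J

/-- `ℓ̃ = ℓ − (λ_1 − λ_n)`. -/
def ltil (n ℓ : ℕ) (lam : ℕ → ℕ) : ℕ := ℓ - (lam 1 - lam n)

/-- Column-strict tableaux `t` of shape `λ' = (λ_1−λ_n, …, λ_{n−1}−λ_n)ᵗ` over the
alphabet `{1, …, λ_1−λ_n}`: the `k`-th column of `t` has length `λ_k − λ_n`
(`1 ≤ k ≤ n−1`), with entry `t j k` in row `j`, column `k`; rows weakly increase
and columns strictly increase; `t` vanishes outside its shape. -/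
def IsCSTp (n : ℕ) (lam : ℕ → ℕ) (t : ℕ → ℕ → ℕ) : Prop :=
  (∀ j k, 1 ≤ j → 1 ≤ k → k ≤ n - 1 → j ≤ lam k - lam n →
      1 ≤ t j k ∧ t j k ≤ lam 1 - lam n) ∧
  (∀ j k, 1 ≤ j → 1 ≤ k → k ≤ n - 1 → j + 1 ≤ lam k - lam n → t j k < t (j + 1) k) ∧
  (∀ j k, 1 ≤ j → 1 ≤ k → k + 1 ≤ n - 1 → j ≤ lam (k + 1) - lam n →
      t j k ≤ t j (k + 1)) ∧
  (∀ j k, j = 0 ∨ k = 0 ∨ n - 1 < k ∨ lam k - lam n < j → t j k = 0)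

/-- The modified vacancy numbers
`P_i^{(k)}(ν,t) = P_i^{(k)}(ν) − Σ_{j=1}^{λ_k−λ_n} χ(i ≥ ℓ̃+t_{j,k})
                + Σ_{j=1}^{λ_{k+1}−λ_n} χ(i ≥ ℓ̃+t_{j,k+1})`. -/
def vacT (n ℓ : ℕ) (lam : ℕ → ℕ) (R : List (ℕ × ℕ)) (ν : ℕ → Multiset ℕ)
    (t : ℕ → ℕ → ℕ) (k i : ℕ) : ℤ :=
  vac R ν k i
    - ∑ j ∈ Finset.Icc 1 (lam k - lam n),
        (if ltil n ℓ lam + t j k ≤ i then (1 : ℤ) else 0)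
    + ∑ j ∈ Finset.Icc 1 (lam (k + 1) - lam n),
        (if ltil n ℓ lam + t j (k + 1) ≤ i then (1 : ℤ) else 0)

/-- Level-`ℓ` restriction for rigged configurations: all parts of all `ν^{(k)}`
are at most `ℓ`, and there is a tableau `t ∈ CST(λ')` such that every label of a
string of length `i` in `(ν,J)^{(k)}` is at most `P_i^{(k)}(ν,t)` (in particular
`P_i^{(k)}(ν,t) ≥ 0`; this encodes `x_i^{(k)} ≤ P_i^{(k)}(ν,t)` where `x_i^{(k)}`
is the largest such label, zero if there is none). -/
def RClev (n ℓ : ℕ) (lam : ℕ → ℕ) (R : List (ℕ × ℕ)) (ν : ℕ → Multiset ℕ)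
    (J : ℕ → ℕ → Multiset ℕ) : Prop :=
  (∀ k, ∀ x ∈ ν k, x ≤ ℓ) ∧
  ∃ t, IsCSTp n lam t ∧ ∀ k i, 1 ≤ k → 1 ≤ i →
    0 ≤ vacT n ℓ lam R ν t k i ∧ ∀ x ∈ J k i, (x : ℤ) ≤ vacT n ℓ lam R ν t k i


lemma Qi_eq_sum {i : ℕ} {ρ : Multiset ℕ} (h : ∀ x ∈ ρ, x ≤ i) : Qi i ρ = ρ.sum := by
  unfold Qi
  have : ρ.map (min i) = ρ.map id :=
    Multiset.map_congr rfl fun x hx => min_eq_right (h x hx)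
  rw [this, Multiset.map_id]

lemma rect_key (k a b : ℕ) (hk : 1 ≤ k) :
    ((a * (b - (k - 1)) : ℕ) : ℤ) - 2 * ((a * (b - k) : ℕ) : ℤ)
      + ((a * (b - (k + 1)) : ℕ) : ℤ) = if b = k then (a : ℤ) else 0 := by
  by_cases h : b = k
  · subst h
    rw [if_pos rfl, show b - (b - 1) = 1 from by omega, Nat.sub_self,
      show b - (b + 1) = 0 from by omega]
    push_cast; ring
  · rw [if_neg h]
    have h2 : a * (b - (k - 1)) + a * (b - (k + 1)) = 2 * (a * (b - k)) := by
      rw [← Nat.mul_add, show (b - (k-1)) + (b - (k+1)) = 2 * (b - k) from by omega]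
      ring
    have h3 := congrArg (Nat.cast : ℕ → ℤ) h2
    push_cast at h3 ⊢
    linarith

lemma rect_second_diff (k : ℕ) (hk : 1 ≤ k) (R : List (ℕ × ℕ)) :
    ((R.map (fun r => r.1 * (r.2 - (k - 1)))).sum : ℤ)
      - 2 * ((R.map (fun r => r.1 * (r.2 - k))).sum : ℤ)
      + ((R.map (fun r => r.1 * (r.2 - (k + 1)))).sum : ℤ)
      = ((xiR R k).sum : ℤ) := by
  induction R with
  | nil => simp [xiR]
  | cons r R ih =>
    have hx : ((xiR (r :: R) k).sum : ℤ)
        = (if r.2 = k then (r.1 : ℤ) else 0) + ((xiR R k).sum : ℤ) := by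
      by_cases h : r.2 = k <;> simp [xiR, List.filter_cons, h]
    rw [hx, ← ih, ← rect_key k r.1 r.2 hk]
    simp only [List.map_cons, List.sum_cons]
    push_cast
    ring

lemma Icc_sum_step (lam : ℕ → ℕ) {m n : ℕ} (h : m ≤ n) (hm : 1 ≤ m) :
    ∑ j ∈ Finset.Icc m n, (lam j : ℤ)
      = (lam m : ℤ) + ∑ j ∈ Finset.Icc (m + 1) n, (lam j : ℤ) := by
  rw [show Finset.Icc m n = insert m (Finset.Icc (m + 1) n) from by
    ext x; simp [Finset.mem_Icc, Finset.mem_insert]; omega,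
    Finset.sum_insert (by simp)]

/-- Let `λ` be a partition with at most `n` parts with
`λ_1 − λ_n ≤ ℓ` and `R` a sequence of rectangles each restricted of level `ℓ`.
Then for every `ν ∈ C^ℓ(λ;R)`, every `t ∈ CST(λ')`, every `1 ≤ k < n` and every
`i ≥ ℓ`, the modified vacancy number vanishes: `P_i^{(k)}(ν,t) = 0`. -/
theorem modified_vacancy_vanishes (n ℓ : ℕ) (hn : 2 ≤ n) (hl : 1 ≤ ℓ)
    (lam : ℕ → ℕ) (hsh : IsShape n lam) (hlev : lam 1 ≤ ℓ + lam n)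
    (R : List (ℕ × ℕ)) (hR : ∀ r ∈ R, 1 ≤ r.1 ∧ 1 ≤ r.2 ∧ r.2 ≤ n)
    (hRlev : ∀ r ∈ R, r.2 < n → r.1 ≤ ℓ)
    (hsz : (∑ j ∈ Finset.Icc 1 n, lam j) = (R.map (fun r => r.1 * r.2)).sum)
    (ν : ℕ → Multiset ℕ) (hconf : IsConfig n lam R ν) (hadm : Admissible R ν)
    (hbound : ∀ k, ∀ x ∈ ν k, x ≤ ℓ)
    (t : ℕ → ℕ → ℕ) (ht : IsCSTp n lam t)
    (k i : ℕ) (hk : 1 ≤ k) (hk2 : k ≤ n - 1) (hi : ℓ ≤ i) :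
    vacT n ℓ lam R ν t k i = 0 := by
  have hkn : k + 1 ≤ n := by omega
  -- Q_i on the ν's are full sizes
  have hQ : ∀ m, (Qi i (ν m) : ℤ) = ((ν m).sum : ℤ) := fun m => by
    rw [Qi_eq_sum (fun x hx => le_trans (hbound m x hx) hi)]
  -- Q_i on ξ^{(k)} is its full size
  have hQxi : (Qi i (xiR R k) : ℤ) = ((xiR R k).sum : ℤ) := by
    rw [Qi_eq_sum]
    intro x hx
    simp only [xiR, Multiset.mem_coe, List.mem_map, List.mem_filter] at hx
    obtain ⟨r, ⟨hrR, hrk⟩, hrx⟩ := hx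
    have hrk' : r.2 = k := by simpa using hrk
    have : r.1 ≤ ℓ := hRlev r hrR (by omega)
    omega
  -- sizes of the ν's
  have hsum : ∀ m, 1 ≤ m → ((ν m).sum : ℤ)
      = (∑ j ∈ Finset.Icc (m + 1) n, (lam j : ℤ))
        - ((R.map (fun r => r.1 * (r.2 - m))).sum : ℤ) := by
    intro m hm
    exact hconf.2.2 m hm
  have hsum0 : ∀ m, m ≤ n → ((ν (m)).sum : ℤ)
      = (∑ j ∈ Finset.Icc (m + 1) n, (lam j : ℤ))
        - ((R.map (fun r => r.1 * (r.2 - m))).sum : ℤ) := by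
    intro m hmn
    rcases Nat.eq_zero_or_pos m with hm0 | hm0
    · subst hm0
      have h := congrArg (Nat.cast : ℕ → ℤ) hsz
      push_cast at h
      simp only [hconf.1, Multiset.sum_zero, Nat.cast_zero, zero_add, Nat.sub_zero]
      push_cast
      linarith
    · exact hsum m hm0
  -- compute vac
  have hvac : vac R ν k i = (lam k : ℤ) - (lam (k + 1) : ℤ) := by
    unfold vac
    rw [hQ, hQ, hQ, hQxi]
    rw [hsum0 (k - 1) (by omega), hsum k hk, hsum (k + 1) (by omega)]
    rw [show k - 1 + 1 = k from by omega]
    have hrect := rect_second_diff k hk R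
    have hg1 := Icc_sum_step lam (show k ≤ n from by omega) hk
    have hg2 := Icc_sum_step lam hkn (by omega)
    -- the rectangle second difference cancels ξ-sum
    have hcanc : ((R.map (fun r => r.1 * (r.2 - (k - 1)))).sum : ℤ)
        - 2 * ((R.map (fun r => r.1 * (r.2 - k))).sum : ℤ)
        + ((R.map (fun r => r.1 * (r.2 - (k + 1)))).sum : ℤ)
        = ((xiR R k).sum : ℤ) := hrect
    linarith
  -- monotonicity of lam
  have hmono1 : lam (k + 1) ≤ lam k := hsh.1 k (k + 1) hk (by omega) hkn
  have hmono2 : lam n ≤ lam (k + 1) := hsh.1 (k + 1) n (by omega) hkn le_rfl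
  have hd : lam 1 - lam n ≤ ℓ := by omega
  -- the first tableau sum
  have hS1 : (∑ j ∈ Finset.Icc 1 (lam k - lam n),
      (if ltil n ℓ lam + t j k ≤ i then (1 : ℤ) else 0))
      = ((lam k - lam n : ℕ) : ℤ) := by
    have hall : ∀ j ∈ Finset.Icc 1 (lam k - lam n),
        (if ltil n ℓ lam + t j k ≤ i then (1 : ℤ) else 0) = 1 := by
      intro j hj
      rw [Finset.mem_Icc] at hj
      have ht1 := ht.1 j k hj.1 hk hk2 hj.2
      rw [if_pos]
      unfold ltil
      omega
    rw [Finset.sum_congr rfl hall, Finset.sum_const, Nat.card_Icc]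
    simp
  -- the second tableau sum
  have hS2 : (∑ j ∈ Finset.Icc 1 (lam (k + 1) - lam n),
      (if ltil n ℓ lam + t j (k + 1) ≤ i then (1 : ℤ) else 0))
      = ((lam (k + 1) - lam n : ℕ) : ℤ) := by
    rcases Nat.lt_or_ge k (n - 1) with hlt | hge
    · have hall : ∀ j ∈ Finset.Icc 1 (lam (k + 1) - lam n),
          (if ltil n ℓ lam + t j (k + 1) ≤ i then (1 : ℤ) else 0) = 1 := by
        intro j hj
        rw [Finset.mem_Icc] at hj
        have ht1 := ht.1 j (k + 1) hj.1 (by omega) (by omega) hj.2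
        rw [if_pos]
        unfold ltil
        omega
      rw [Finset.sum_congr rfl hall, Finset.sum_const, Nat.card_Icc]
      simp
    · have hkn' : k + 1 = n := by omega
      rw [hkn', Nat.sub_self]
      simp
  unfold vacT
  rw [hvac, hS1, hS2]
  omega

end RiggedConf
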